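/- arXiv:1601.02798 — 2 statements merged into one kernel-verified Lean document; each statement's English description precedes it below -/
import Mathlib

section
/- Let σ:[a,b]²→ℝ satisfy Assumption 1 with exponent κ∈(0,2), function ω and c(t):=−(∂ω/∂z)(t,t,0). Then there exist a constant M₁<∞ and δ₀>0 such that for all 0<δ≤δ₀ and all t∈[a+δ,b−δ]: |σ(t,t)−(1/2)σ(t,t−δ)−(1/2)σ(t,t+δ) − δ^κ c(t)| ≤ M₁ δ^{min{2κ,2}}. -/
open MeasureTheory

/-- Second-order Taylor bound from a Lipschitz estimate on the derivative. -/
lemma taylor_bound_of_lip {E F : Type*} [NormedAddCommGroup E] [NormedSpace ℝ E]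
    [NormedAddCommGroup F] [NormedSpace ℝ F]
    {s : Set E} (hs : Convex ℝ s) {f : E → F} {f' : E → E →L[ℝ] F} {C : ℝ} (hC : 0 ≤ C)
    (hf : ∀ x ∈ s, HasFDerivAt f (f' x) x)
    (hlip : ∀ x ∈ s, ∀ y ∈ s, ‖f' y - f' x‖ ≤ C * ‖y - x‖)
    {p q : E} (hp : p ∈ s) (hq : q ∈ s) :
    ‖f q - f p - f' p (q - p)‖ ≤ C * ‖q - p‖ * ‖q - p‖ := by
  have hseg : segment ℝ p q ⊆ s := hs.segment_subset hp hq
  have key := (convex_segment p q).norm_image_sub_le_of_norm_hasFDerivWithin_le'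
    (f' := f') (φ := f' p) (C := C * ‖q - p‖)
    (fun x hx => (hf x (hseg hx)).hasFDerivWithinAt)
    (fun x hx => by
      have h1 := hlip p hp x (hseg hx)
      refine h1.trans ?_
      gcongr
      rw [segment_eq_image'] at hx
      obtain ⟨θ, hθ, rfl⟩ := hx
      simp only [add_sub_cancel_left, norm_smul, Real.norm_eq_abs,
        abs_of_nonneg hθ.1]
      exact mul_le_of_le_one_left (norm_nonneg _) hθ.2)
    (left_mem_segment ℝ p q) (right_mem_segment ℝ p q)
  calc ‖f q - f p - (f' p) (q - p)‖ ≤ C * ‖q - p‖ * ‖q - p‖ := key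


/-- Assumption 1 of the paper: the covariance function `σ` on `[a,b]²` can be written as
`σ(t,s) = ω(t,s,|t-s|^κ)` for a function `ω` that is twice continuously differentiable on
an open set `Ω ⊇ [a,b]² × [0, b-a]`, with `0 < κ < 2`, where
`c(t) = -(∂ω/∂z)(t,t,0)` satisfies `inf_{t∈[a,b]} c(t) > 0`. -/
structure Assumption1 (a b κ : ℝ) (σ : ℝ → ℝ → ℝ) (w : ℝ × ℝ × ℝ → ℝ) (c : ℝ → ℝ) :
    Prop where
  lt : a < b
  κ_pos : 0 < κ
  κ_lt_two : κ < 2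
  smooth : ∃ Ω : Set (ℝ × ℝ × ℝ), IsOpen Ω ∧
    (Set.Icc a b ×ˢ Set.Icc a b ×ˢ Set.Icc (0 : ℝ) (b - a)) ⊆ Ω ∧ ContDiffOn ℝ 2 w Ω
  σ_eq : ∀ t ∈ Set.Icc a b, ∀ s ∈ Set.Icc a b, σ t s = w (t, s, |t - s| ^ κ)
  deriv_z : ∀ t ∈ Set.Icc a b, HasDerivAt (fun z => w (t, t, z)) (-(c t)) 0
  c_inf_pos : ∃ c₀ > 0, ∀ t ∈ Set.Icc a b, c₀ ≤ c t

/-- `g_{δ,t}(s) = σ(s,t) - ½σ(s,t-δ) - ½σ(s,t+δ)`, the covariance of `X(s)` with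
`Z_δ(X,t) = X(t) - ½(X(t-δ)+X(t+δ))` for a centered process `X` with covariance `σ`. -/
noncomputable def gdelta (σ : ℝ → ℝ → ℝ) (δ t s : ℝ) : ℝ :=
  σ s t - (1 / 2) * σ s (t - δ) - (1 / 2) * σ s (t + δ)

/-- `V_δ(t) = Var(Z_δ(X,t))` expressed via the covariance function `σ`. -/
noncomputable def Vdelta (σ : ℝ → ℝ → ℝ) (δ t : ℝ) : ℝ :=
  σ t t + (1 / 4) * σ (t - δ) (t - δ) + (1 / 4) * σ (t + δ) (t + δ)
    - σ t (t - δ) - σ t (t + δ) + (1 / 2) * σ (t - δ) (t + δ)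


set_option maxHeartbeats 1000000 in
/-- expansion (A.4) of the paper: under Assumption 1 there are `M₁ < ∞`
and `δ₀ > 0` such that for all `0 < δ ≤ δ₀` and `t ∈ [a+δ, b-δ]`,
`|σ(t,t) - ½σ(t,t-δ) - ½σ(t,t+δ) - δ^κ c(t)| ≤ M₁ δ^{min(2κ,2)}`;
the quantity bounded is `E(X(t) Z_δ(X,t)) - δ^κ c(t)`. -/
theorem gdelta_diag_expansion
    (a b κ : ℝ) (σ : ℝ → ℝ → ℝ) (w : ℝ × ℝ × ℝ → ℝ) (c : ℝ → ℝ)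
    (h : Assumption1 a b κ σ w c) :
    ∃ M₁ : ℝ, ∃ δ₀ > 0, ∀ δ, 0 < δ → δ ≤ δ₀ → ∀ t ∈ Set.Icc (a + δ) (b - δ),
      |σ t t - (1 / 2) * σ t (t - δ) - (1 / 2) * σ t (t + δ) - δ ^ κ * c t|
        ≤ M₁ * δ ^ min (2 * κ) 2 := by
  obtain ⟨Ω, hΩo, hKΩ, hw⟩ := h.smooth
  have hba : (0:ℝ) < b - a := sub_pos.2 h.lt
  set K : Set (ℝ × ℝ × ℝ) := Set.Icc a b ×ˢ Set.Icc a b ×ˢ Set.Icc (0:ℝ) (b-a) with hKdef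
  have hKc : IsCompact K := isCompact_Icc.prod (isCompact_Icc.prod isCompact_Icc)
  have hKconv : Convex ℝ K := (convex_Icc _ _).prod ((convex_Icc _ _).prod (convex_Icc _ _))
  have hdiff : ∀ x ∈ K, HasFDerivAt w (fderiv ℝ w x) x := fun x hx =>
    ((hw.contDiffAt (hΩo.mem_nhds (hKΩ hx))).differentiableAt (by norm_num)).hasFDerivAt
  have hw1 : ContDiffOn ℝ 1 (fderiv ℝ w) Ω := hw.fderiv_of_isOpen hΩo (by norm_num)
  have hcont2 : ContinuousOn (fderiv ℝ (fderiv ℝ w)) Ω :=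
    hw1.continuousOn_fderiv_of_isOpen hΩo le_rfl
  obtain ⟨C0, hC0⟩ := hKc.exists_bound_of_continuousOn (f := fderiv ℝ (fderiv ℝ w)) (hcont2.mono hKΩ)
  set C := max C0 0 with hCdef
  have hCnn : (0:ℝ) ≤ C := le_max_right _ _
  have hlip : ∀ x ∈ K, ∀ y ∈ K, ‖fderiv ℝ w y - fderiv ℝ w x‖ ≤ C * ‖y - x‖ := by
    intro x hx y hy
    exact hKconv.norm_image_sub_le_of_norm_hasFDerivWithin_le
      (fun z hz => ((hw1.contDiffAt (hΩo.mem_nhds (hKΩ hz))).differentiableAt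
        one_ne_zero).hasFDerivAt.hasFDerivWithinAt)
      (fun z hz => (hC0 z hz).trans (le_max_left _ _)) hx hy
  refine ⟨2 * C, min 1 ((b-a) ^ (1/κ)), lt_min one_pos (Real.rpow_pos_of_pos hba _), ?_⟩
  intro δ hδ0 hδδ₀ t ht
  have hδ1 : δ ≤ 1 := hδδ₀.trans (min_le_left _ _)
  set z := δ ^ κ with hzdef
  have hz0 : 0 < z := Real.rpow_pos_of_pos hδ0 κ
  have hzle : z ≤ b - a := by
    calc z ≤ ((b-a) ^ (1/κ)) ^ κ :=
          Real.rpow_le_rpow hδ0.le (hδδ₀.trans (min_le_right _ _)) h.κ_pos.le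
      _ = (b-a) ^ ((1/κ) * κ) := by rw [← Real.rpow_mul hba.le]
      _ = b - a := by rw [one_div_mul_cancel (ne_of_gt h.κ_pos), Real.rpow_one]
  have htt : t ∈ Set.Icc a b := ⟨by linarith [ht.1], by linarith [ht.2]⟩
  have htm : t - δ ∈ Set.Icc a b := ⟨by linarith [ht.1], by linarith [ht.2]⟩
  have htp : t + δ ∈ Set.Icc a b := ⟨by linarith [ht.1], by linarith [ht.2]⟩
  -- rewrite σ via w
  have e0 : σ t t = w (t, t, 0) := by
    rw [h.σ_eq t htt t htt, sub_self, abs_zero, Real.zero_rpow (ne_of_gt h.κ_pos)]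
  have em : σ t (t-δ) = w (t, t-δ, z) := by
    rw [h.σ_eq t htt _ htm, show t - (t - δ) = δ by ring, abs_of_pos hδ0]
  have ep : σ t (t+δ) = w (t, t+δ, z) := by
    rw [h.σ_eq t htt _ htp, show t - (t + δ) = -δ by ring, abs_neg, abs_of_pos hδ0]
  -- points
  set p0 : ℝ × ℝ × ℝ := (t, t, 0) with hp0def
  set pz : ℝ × ℝ × ℝ := (t, t, z) with hpzdef
  set pm : ℝ × ℝ × ℝ := (t, t-δ, z) with hpmdef
  set pp : ℝ × ℝ × ℝ := (t, t+δ, z) with hppdef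
  have hzI : z ∈ Set.Icc (0:ℝ) (b-a) := ⟨hz0.le, hzle⟩
  have h0I : (0:ℝ) ∈ Set.Icc (0:ℝ) (b-a) := ⟨le_refl _, hba.le⟩
  have hp0 : p0 ∈ K := ⟨htt, htt, h0I⟩
  have hpz : pz ∈ K := ⟨htt, htt, hzI⟩
  have hpm : pm ∈ K := ⟨htt, htm, hzI⟩
  have hpp : pp ∈ K := ⟨htt, htp, hzI⟩
  -- derivative in z-direction at p0
  have hγ : HasDerivAt (fun u : ℝ => ((t:ℝ), (t:ℝ), u)) ((0:ℝ), (0:ℝ), (1:ℝ)) 0 :=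
    HasDerivAt.prodMk (hasDerivAt_const _ _) (HasDerivAt.prodMk (hasDerivAt_const _ _) (hasDerivAt_id _))
  have hcomp : HasDerivAt (fun u : ℝ => w (t, t, u)) (fderiv ℝ w p0 ((0:ℝ),(0:ℝ),(1:ℝ))) 0 :=
    (hdiff p0 hp0).comp_hasDerivAt 0 hγ
  have hder1 : fderiv ℝ w p0 ((0:ℝ),(0:ℝ),(1:ℝ)) = -(c t) := hcomp.unique (h.deriv_z t htt)
  -- Taylor estimates
  have hA := taylor_bound_of_lip hKconv hCnn hdiff hlip hp0 hpz
  have hBp := taylor_bound_of_lip hKconv hCnn hdiff hlip hpz hpp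
  have hBm := taylor_bound_of_lip hKconv hCnn hdiff hlip hpz hpm
  have hzsub : pz - p0 = ((0:ℝ), (0:ℝ), z) := by
    simp [hpzdef, hp0def, Prod.ext_iff]
  have hzn : ‖pz - p0‖ = z := by
    rw [hzsub]
    simp [Prod.norm_def, abs_of_nonneg hz0.le, hz0.le]
  have hpsub : pp - pz = ((0:ℝ), δ, (0:ℝ)) := by
    simp [hppdef, hpzdef, Prod.ext_iff]
  have hpn : ‖pp - pz‖ = δ := by
    rw [hpsub]; simp [Prod.norm_def, abs_of_nonneg hδ0.le, hδ0.le]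
  have hmsub : pm - pz = ((0:ℝ), -δ, (0:ℝ)) := by
    simp [hpmdef, hpzdef, Prod.ext_iff]
  have hmn : ‖pm - pz‖ = δ := by
    rw [hmsub]; simp [Prod.norm_def, abs_of_nonneg hδ0.le, hδ0.le]
  -- linear term at p0 in z direction
  have hlin0 : fderiv ℝ w p0 (pz - p0) = -(z * c t) := by
    rw [hzsub, show ((0:ℝ), (0:ℝ), z) = z • ((0:ℝ),(0:ℝ),(1:ℝ)) by simp [Prod.ext_iff],
      (fderiv ℝ w p0).map_smul, hder1]
    simp [mul_comm]
  -- linear terms at pz cancel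
  have hlincancel : fderiv ℝ w pz (pp - pz) + fderiv ℝ w pz (pm - pz) = 0 := by
    rw [← (fderiv ℝ w pz).map_add, hpsub, hmsub,
      show ((0:ℝ), δ, (0:ℝ)) + ((0:ℝ), -δ, (0:ℝ)) = (0:ℝ×ℝ×ℝ) by simp [Prod.ext_iff]]
    exact (fderiv ℝ w pz).map_zero
  rw [hlin0, hzn] at hA
  rw [hpn] at hBp
  rw [hmn] at hBm
  rw [Real.norm_eq_abs] at hA hBp hBm
  -- assemble
  have hD : |fderiv ℝ w pz (pp - pz) + fderiv ℝ w pz (pm - pz)| = 0 := by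
    rw [hlincancel, abs_zero]
  have key : |σ t t - (1 / 2) * σ t (t - δ) - (1 / 2) * σ t (t + δ) - δ ^ κ * c t|
      ≤ C * (z * z) + C * (δ * δ) := by
    rw [e0, em, ep]
    set A := w pz - w p0 - -(z * c t) with hAdef
    set B := w pp - w pz - fderiv ℝ w pz (pp - pz) with hBdef
    set B' := w pm - w pz - fderiv ℝ w pz (pm - pz) with hB'def
    set D := fderiv ℝ w pz (pp - pz) + fderiv ℝ w pz (pm - pz) with hDdef
    have expand : w p0 - 1 / 2 * w pm - 1 / 2 * w pp - z * c t
        = -A - (1/2) * B - (1/2) * B' - (1/2) * D := by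
      rw [hAdef, hBdef, hB'def, hDdef]; ring
    have e1 : |(-A) - (1/2) * B - (1/2) * B' - (1/2) * D|
        ≤ |A| + (1/2) * |B| + (1/2) * |B'| + (1/2) * |D| := by
      rw [abs_le]
      constructor <;>
        linarith [le_abs_self A, neg_abs_le A, le_abs_self B, neg_abs_le B,
          le_abs_self B', neg_abs_le B', le_abs_self D, neg_abs_le D]
    calc |w p0 - 1 / 2 * w pm - 1 / 2 * w pp - z * c t|
        = |(-A) - (1/2) * B - (1/2) * B' - (1/2) * D| := by rw [expand]
      _ ≤ |A| + (1/2) * |B| + (1/2) * |B'| + (1/2) * |D| := e1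
      _ ≤ C * (z * z) + C * (δ * δ) := by rw [hD]; linarith [hA, hBp, hBm]
  -- convert to rpow bound
  have hzz : z * z = δ ^ (2 * κ) := by
    rw [hzdef, ← Real.rpow_add hδ0]; ring_nf
  have hdd : δ * δ = δ ^ (2:ℝ) := by
    rw [show (2:ℝ) = ((2:ℕ):ℝ) by norm_num, Real.rpow_natCast]; ring
  have h1 : δ ^ (2 * κ) ≤ δ ^ min (2 * κ) 2 :=
    Real.rpow_le_rpow_of_exponent_ge hδ0 hδ1 (min_le_left _ _)
  have h2 : δ ^ (2:ℝ) ≤ δ ^ min (2 * κ) 2 :=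
    Real.rpow_le_rpow_of_exponent_ge hδ0 hδ1 (min_le_right _ _)
  calc |σ t t - 1 / 2 * σ t (t - δ) - 1 / 2 * σ t (t + δ) - δ ^ κ * c t|
      ≤ C * (z * z) + C * (δ * δ) := key
    _ = C * δ ^ (2 * κ) + C * δ ^ (2:ℝ) := by rw [hzz, hdd]
    _ ≤ C * δ ^ min (2 * κ) 2 + C * δ ^ min (2 * κ) 2 := by gcongr
    _ = 2 * C * δ ^ min (2 * κ) 2 := by ring
end

section
/- Let σ:[a,b]²→ℝ satisfy Assumption 1 with exponent κ∈(0,2), function ω and c(t):=−(∂ω/∂z)(t,t,0), and set g_{δ,t}(s):=σ(s,t)−(1/2)σ(s,t−δ)−(1/2)σ(s,t+δ). Then for every 0<C<∞ there exist a constant M<∞ and δ₀>0 such that for all 0<δ≤δ₀, all u∈[−C,C], and all t∈[a+(1+C)δ, b−(1+C)δ]: |g_{δ,t}(t+uδ) + c(t)δ^κ(|u|^κ − (1/2)|u+1|^κ − (1/2)|u−1|^κ)| ≤ M δ^{min{2κ,2}}. -/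
open MeasureTheory

private lemma taylor_bound {f f' : ℝ → ℝ} {s : Set ℝ} (hs : Convex ℝ s)
    (hd : ∀ x ∈ s, HasDerivAt f (f' x) x)
    {L : ℝ} (hL0 : 0 ≤ L)
    (hL : ∀ x ∈ s, ∀ y ∈ s, |f' x - f' y| ≤ L * |x - y|)
    {x₀ x₁ : ℝ} (h₀ : x₀ ∈ s) (h₁ : x₁ ∈ s) :
    |f x₁ - f x₀ - f' x₀ * (x₁ - x₀)| ≤ L * |x₁ - x₀| ^ 2 := by
  have hseg : segment ℝ x₀ x₁ ⊆ s := hs.segment_subset h₀ h₁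
  have habs : ∀ x ∈ segment ℝ x₀ x₁, |x - x₀| ≤ |x₁ - x₀| := by
    intro x hx
    rw [segment_eq_uIcc] at hx
    rcases Set.mem_uIcc.mp hx with ⟨h1, h2⟩ | ⟨h1, h2⟩ <;>
      · rw [abs_sub_le_iff]
        constructor <;> linarith [le_abs_self (x₁ - x₀), neg_abs_le (x₁ - x₀)]
  have hgd : ∀ x ∈ segment ℝ x₀ x₁,
      HasDerivWithinAt (fun y => f y - f' x₀ * y) (f' x - f' x₀) (segment ℝ x₀ x₁) x := by
    intro x hx
    have h2 : HasDerivAt (fun y : ℝ => f' x₀ * y) (f' x₀) x := by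
      simpa using (hasDerivAt_id x).const_mul (f' x₀)
    exact ((hd x (hseg hx)).sub h2).hasDerivWithinAt
  have hbound : ∀ x ∈ segment ℝ x₀ x₁, ‖f' x - f' x₀‖ ≤ L * |x₁ - x₀| := by
    intro x hx
    calc ‖f' x - f' x₀‖ ≤ L * |x - x₀| := hL x (hseg hx) x₀ h₀
      _ ≤ L * |x₁ - x₀| := by
          exact mul_le_mul_of_nonneg_left (habs x hx) hL0
  have := (convex_segment x₀ x₁).norm_image_sub_le_of_norm_hasDerivWithin_le hgd hbound
    (left_mem_segment ℝ x₀ x₁) (right_mem_segment ℝ x₀ x₁)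
  have heq : (f x₁ - f' x₀ * x₁) - (f x₀ - f' x₀ * x₀) = f x₁ - f x₀ - f' x₀ * (x₁ - x₀) := by
    ring
  rw [Real.norm_eq_abs, Real.norm_eq_abs, heq] at this
  calc |f x₁ - f x₀ - f' x₀ * (x₁ - x₀)| ≤ L * |x₁ - x₀| * |x₁ - x₀| := this
    _ = L * |x₁ - x₀| ^ 2 := by ring

set_option maxHeartbeats 1000000 in
/-- expansion (A.7) of the paper: under Assumption 1, for every `0 < C < ∞`
there are `M < ∞` and `δ₀ > 0` such that for all `0 < δ ≤ δ₀`, all `u ∈ [-C, C]` and all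
`t ∈ [a+(1+C)δ, b-(1+C)δ]`,
`|g_{δ,t}(t+uδ) + c(t) δ^κ (|u|^κ - ½|u+1|^κ - ½|u-1|^κ)| ≤ M δ^{min(2κ,2)}`. -/
theorem gdelta_near_expansion
    (a b κ : ℝ) (σ : ℝ → ℝ → ℝ) (w : ℝ × ℝ × ℝ → ℝ) (c : ℝ → ℝ)
    (h : Assumption1 a b κ σ w c) :
    ∀ C : ℝ, 0 < C → ∃ M : ℝ, ∃ δ₀ > 0, ∀ δ, 0 < δ → δ ≤ δ₀ →
      ∀ u ∈ Set.Icc (-C) C, ∀ t ∈ Set.Icc (a + (1 + C) * δ) (b - (1 + C) * δ),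
        |gdelta σ δ t (t + u * δ)
            + c t * δ ^ κ * (|u| ^ κ - (1 / 2) * |u + 1| ^ κ - (1 / 2) * |u - 1| ^ κ)|
          ≤ M * δ ^ min (2 * κ) 2 := by
  obtain ⟨Ω, hΩo, hKΩ, hw⟩ := h.smooth
  have hab := h.lt
  have hκ := h.κ_pos
  intro C hC
  have h1C : (0:ℝ) < 1 + C := by linarith
  set K : Set (ℝ × ℝ × ℝ) := Set.Icc a b ×ˢ Set.Icc a b ×ˢ Set.Icc (0:ℝ) (b-a) with hKdef
  have hKc : IsCompact K := isCompact_Icc.prod (isCompact_Icc.prod isCompact_Icc)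
  have hKconv : Convex ℝ K :=
    (convex_Icc a b).prod ((convex_Icc a b).prod (convex_Icc 0 (b-a)))
  have hmemK : ∀ x ∈ Set.Icc a b, ∀ y ∈ Set.Icc a b, ∀ z ∈ Set.Icc (0:ℝ) (b-a),
      ((x, y, z) : ℝ × ℝ × ℝ) ∈ K := by
    intro x hx y hy z hz
    exact ⟨hx, hy, hz⟩
  have hwd : ∀ p ∈ Ω, DifferentiableAt ℝ w p := fun p hp =>
    (hw.differentiableOn (by norm_num)).differentiableAt (hΩo.mem_nhds hp)
  have hg1 : ContDiffOn ℝ 1 (fderiv ℝ w) Ω := hw.fderiv_of_isOpen hΩo (by norm_num)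
  have hgd : ∀ p ∈ Ω, DifferentiableAt ℝ (fderiv ℝ w) p := fun p hp =>
    (hg1.differentiableOn (by norm_num)).differentiableAt (hΩo.mem_nhds hp)
  have hgc : ContinuousOn (fderiv ℝ (fderiv ℝ w)) Ω :=
    hg1.continuousOn_fderiv_of_isOpen hΩo (by norm_num)
  obtain ⟨L, hLb⟩ := hKc.exists_bound_of_continuousOn (f := fderiv ℝ (fderiv ℝ w)) (hgc.mono hKΩ)
  have hL0 : 0 ≤ L := le_trans (norm_nonneg _)
    (hLb (a, a, 0) (hmemK a ⟨le_refl a, hab.le⟩ a ⟨le_refl a, hab.le⟩ 0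
      ⟨le_refl 0, by linarith⟩))
  have hLip : ∀ p ∈ K, ∀ q ∈ K, ‖fderiv ℝ w p - fderiv ℝ w q‖ ≤ L * ‖p - q‖ := by
    intro p hp q hq
    exact hKconv.norm_image_sub_le_of_norm_fderiv_le
      (fun x hx => hgd x (hKΩ hx)) hLb hq hp
  have hLipDir : ∀ p ∈ K, ∀ q ∈ K, ∀ e : ℝ × ℝ × ℝ, ‖e‖ ≤ 1 →
      |fderiv ℝ w p e - fderiv ℝ w q e| ≤ L * ‖p - q‖ := by
    intro p hp q hq e he
    have h1 : fderiv ℝ w p e - fderiv ℝ w q e = (fderiv ℝ w p - fderiv ℝ w q) e := by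
      simp
    rw [h1, ← Real.norm_eq_abs]
    calc ‖(fderiv ℝ w p - fderiv ℝ w q) e‖ ≤ ‖fderiv ℝ w p - fderiv ℝ w q‖ * ‖e‖ :=
          ContinuousLinearMap.le_opNorm _ _
      _ ≤ (L * ‖p - q‖) * 1 :=
          mul_le_mul (hLip p hp q hq) he (norm_nonneg _) (by positivity)
      _ = L * ‖p - q‖ := by ring
  -- choice of δ₀
  refine ⟨L + 2 * L * ((1+C) ^ κ) ^ 2 + 2 * L * ((1+C) * (1+C) ^ κ),
    min 1 ((b-a) ^ κ⁻¹ / (1+C)), ?_, ?_⟩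
  · have : (0:ℝ) < (b-a) ^ κ⁻¹ := Real.rpow_pos_of_pos (by linarith) _
    positivity
  intro δ hδpos hδ₀ u hu t ht
  have hδ1 : δ ≤ 1 := le_trans hδ₀ (min_le_left _ _)
  have hδba : ((1+C) * δ) ^ κ ≤ b - a := by
    have h1 : (1+C) * δ ≤ (b-a) ^ κ⁻¹ := by
      have := le_trans hδ₀ (min_le_right 1 ((b-a) ^ κ⁻¹ / (1+C)))
      calc (1+C) * δ ≤ (1+C) * ((b-a) ^ κ⁻¹ / (1+C)) :=
            mul_le_mul_of_nonneg_left this h1C.le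
        _ = (b-a) ^ κ⁻¹ := by field_simp
    calc ((1+C) * δ) ^ κ ≤ ((b-a) ^ κ⁻¹) ^ κ :=
          Real.rpow_le_rpow (by positivity) h1 hκ.le
      _ = (b-a) ^ (κ⁻¹ * κ) := (Real.rpow_mul (by linarith) _ _).symm
      _ = b - a := by rw [inv_mul_cancel₀ (ne_of_gt hκ), Real.rpow_one]
  obtain ⟨hu1, hu2⟩ := hu
  obtain ⟨ht1, ht2⟩ := ht
  set s : ℝ := t + u * δ with hsdef
  have hsab : s ∈ Set.Icc a b := by
    constructor <;> nlinarith
  have htab : t ∈ Set.Icc a b := ⟨by nlinarith, by nlinarith⟩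
  have htm : t - δ ∈ Set.Icc a b := ⟨by nlinarith, by nlinarith⟩
  have htp : t + δ ∈ Set.Icc a b := ⟨by nlinarith, by nlinarith⟩
  -- z bounds
  have hzbound : ∀ v : ℝ, |v| ≤ 1 + C → (|v| * δ) ^ κ ∈ Set.Icc (0:ℝ) (b-a) ∧
      (|v| * δ) ^ κ ≤ (1+C) ^ κ * δ ^ κ := by
    intro v hv
    have h1 : (|v| * δ) ^ κ ≤ ((1+C) * δ) ^ κ :=
      Real.rpow_le_rpow (by positivity) (mul_le_mul_of_nonneg_right hv hδpos.le) hκ.le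
    refine ⟨⟨Real.rpow_nonneg (by positivity) _, le_trans h1 hδba⟩, ?_⟩
    calc (|v| * δ) ^ κ ≤ ((1+C) * δ) ^ κ := h1
      _ = (1+C) ^ κ * δ ^ κ := Real.mul_rpow h1C.le hδpos.le
  -- the key estimate for the z-part
  have hct : fderiv ℝ w (t, t, 0) (0, 0, 1) = -(c t) := by
    have hcurve : HasDerivAt (fun z : ℝ => ((t:ℝ), (t:ℝ), z)) ((0:ℝ), (0:ℝ), (1:ℝ)) 0 :=
      HasDerivAt.prodMk (hasDerivAt_const _ _) (HasDerivAt.prodMk (hasDerivAt_const _ _) (hasDerivAt_id _))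
    have hmem : ((t, t, 0) : ℝ × ℝ × ℝ) ∈ Ω :=
      hKΩ (hmemK t htab t htab 0 ⟨le_refl 0, by linarith⟩)
    have h1 : HasDerivAt (fun z : ℝ => w (t, t, z)) (fderiv ℝ w (t, t, 0) (0, 0, 1)) 0 :=
      (hwd _ hmem).hasFDerivAt.comp_hasDerivAt 0 hcurve
    exact h1.unique (h.deriv_z t htab)
  have key : ∀ t' ∈ Set.Icc a b, |t' - t| ≤ δ → ∀ v : ℝ, |v| ≤ 1 + C →
      |w (s, t', (|v| * δ) ^ κ) - w (s, t', 0) + c t * ((|v| * δ) ^ κ)|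
        ≤ L * ((1+C) ^ κ * δ ^ κ) ^ 2 + L * ((1+C) * δ) * ((1+C) ^ κ * δ ^ κ) := by
    intro t' ht' hct' v hv
    obtain ⟨hzmem, hzle⟩ := hzbound v hv
    set z : ℝ := (|v| * δ) ^ κ with hzdef
    have hz0 : (0:ℝ) ∈ Set.Icc (0:ℝ) (b-a) := ⟨le_refl 0, by linarith⟩
    have hmem' : ∀ z' ∈ Set.Icc (0:ℝ) (b-a), ((s, t', z') : ℝ × ℝ × ℝ) ∈ K :=
      fun z' hz' => hmemK s hsab t' ht' z' hz'
    have hψd : ∀ z' ∈ Set.Icc (0:ℝ) (b-a),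
        HasDerivAt (fun z'' : ℝ => w (s, t', z'')) (fderiv ℝ w (s, t', z') (0, 0, 1)) z' := by
      intro z' hz'
      have hcurve : HasDerivAt (fun z'' : ℝ => ((s:ℝ), (t':ℝ), z'')) ((0:ℝ), (0:ℝ), (1:ℝ)) z' :=
        HasDerivAt.prodMk (hasDerivAt_const _ _) (HasDerivAt.prodMk (hasDerivAt_const _ _) (hasDerivAt_id _))
      exact (hwd _ (hKΩ (hmem' z' hz'))).hasFDerivAt.comp_hasDerivAt z' hcurve
    have he3 : ‖((0:ℝ), (0:ℝ), (1:ℝ))‖ ≤ 1 := by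
      simp [Prod.norm_def]
    have hψLip : ∀ z1 ∈ Set.Icc (0:ℝ) (b-a), ∀ z2 ∈ Set.Icc (0:ℝ) (b-a),
        |fderiv ℝ w (s, t', z1) (0, 0, 1) - fderiv ℝ w (s, t', z2) (0, 0, 1)| ≤ L * |z1 - z2| := by
      intro z1 hz1 z2 hz2
      have hnorm : ‖((s, t', z1) : ℝ × ℝ × ℝ) - (s, t', z2)‖ = |z1 - z2| := by
        simp [Prod.norm_def, Prod.sub_def, Real.norm_eq_abs]
      have := hLipDir _ (hmem' z1 hz1) _ (hmem' z2 hz2) _ he3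
      rwa [hnorm] at this
    have htay := taylor_bound (convex_Icc 0 (b-a)) hψd hL0 hψLip hz0 hzmem
    simp only [sub_zero] at htay
    -- closeness of the z-derivative to -(c t)
    have hdir : |fderiv ℝ w (s, t', 0) (0, 0, 1) - (-(c t))| ≤ L * ((1+C) * δ) := by
      rw [← hct]
      have hnorm : ‖((s, t', 0) : ℝ × ℝ × ℝ) - (t, t, 0)‖ ≤ (1+C) * δ := by
        have h1 : |s - t| ≤ (1+C) * δ := by
          rw [hsdef]
          rw [show t + u * δ - t = u * δ by ring, abs_mul, abs_of_pos hδpos]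
          have : |u| ≤ C := abs_le.mpr ⟨hu1, hu2⟩
          nlinarith
        have h2 : |t' - t| ≤ (1+C) * δ := by nlinarith
        rw [Prod.norm_def, Prod.norm_def]
        simp only [Prod.fst_sub, Prod.snd_sub, Real.norm_eq_abs]
        refine max_le h1 (max_le h2 ?_)
        simp; positivity
      calc |fderiv ℝ w (s, t', 0) (0, 0, 1) - fderiv ℝ w (t, t, 0) (0, 0, 1)|
          ≤ L * ‖((s, t', 0) : ℝ × ℝ × ℝ) - (t, t, 0)‖ :=
            hLipDir _ (hmem' 0 hz0) _ (hmemK t htab t htab 0 hz0) _ he3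
        _ ≤ L * ((1+C) * δ) := mul_le_mul_of_nonneg_left hnorm hL0
    have hsplit : w (s, t', z) - w (s, t', 0) + c t * z
        = (w (s, t', z) - w (s, t', 0) - fderiv ℝ w (s, t', 0) (0, 0, 1) * z)
          + (fderiv ℝ w (s, t', 0) (0, 0, 1) - (-(c t))) * z := by ring
    rw [hsplit]
    have habs2 : |(fderiv ℝ w (s, t', 0) (0, 0, 1) - (-(c t))) * z|
        ≤ (L * ((1+C) * δ)) * ((1+C) ^ κ * δ ^ κ) := by
      rw [abs_mul]
      refine mul_le_mul hdir ?_ (abs_nonneg _) (by positivity)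
      rw [abs_of_nonneg hzmem.1]; exact hzle
    have habs1 : |w (s, t', z) - w (s, t', 0) - fderiv ℝ w (s, t', 0) (0, 0, 1) * z|
        ≤ L * ((1+C) ^ κ * δ ^ κ) ^ 2 := by
      refine le_trans htay ?_
      rw [abs_of_nonneg hzmem.1]
      have : z ^ 2 ≤ ((1+C) ^ κ * δ ^ κ) ^ 2 := by
        exact pow_le_pow_left₀ hzmem.1 hzle 2
      exact mul_le_mul_of_nonneg_left this hL0
    exact le_trans (abs_add_le _ _) (add_le_add habs1 habs2)
  -- second difference in the y variable
  have hz0' : (0:ℝ) ∈ Set.Icc (0:ℝ) (b-a) := ⟨le_refl 0, by linarith⟩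
  have hA : |w (s, t, 0) - (1/2) * w (s, t-δ, 0) - (1/2) * w (s, t+δ, 0)| ≤ L * δ ^ 2 := by
    have hfd : ∀ y ∈ Set.Icc a b,
        HasDerivAt (fun y' : ℝ => w (s, y', 0)) (fderiv ℝ w (s, y, 0) (0, 1, 0)) y := by
      intro y hy
      have hcurve : HasDerivAt (fun y' : ℝ => ((s:ℝ), y', (0:ℝ))) ((0:ℝ), (1:ℝ), (0:ℝ)) y :=
        HasDerivAt.prodMk (hasDerivAt_const _ _) (HasDerivAt.prodMk (hasDerivAt_id _) (hasDerivAt_const _ _))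
      exact (hwd _ (hKΩ (hmemK s hsab y hy 0 hz0'))).hasFDerivAt.comp_hasDerivAt y hcurve
    have he2 : ‖((0:ℝ), (1:ℝ), (0:ℝ))‖ ≤ 1 := by simp [Prod.norm_def]
    have hfLip : ∀ y1 ∈ Set.Icc a b, ∀ y2 ∈ Set.Icc a b,
        |fderiv ℝ w (s, y1, 0) (0, 1, 0) - fderiv ℝ w (s, y2, 0) (0, 1, 0)| ≤ L * |y1 - y2| := by
      intro y1 hy1 y2 hy2
      have hnorm : ‖((s, y1, 0) : ℝ × ℝ × ℝ) - (s, y2, 0)‖ = |y1 - y2| := by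
        simp [Prod.norm_def, Prod.sub_def, Real.norm_eq_abs]
      have := hLipDir _ (hmemK s hsab y1 hy1 0 hz0') _ (hmemK s hsab y2 hy2 0 hz0') _ he2
      rwa [hnorm] at this
    have h1 := taylor_bound (convex_Icc a b) hfd hL0 hfLip htab htp
    have h2 := taylor_bound (convex_Icc a b) hfd hL0 hfLip htab htm
    rw [show t + δ - t = δ by ring] at h1
    rw [show t - δ - t = -δ by ring] at h2
    rw [abs_of_pos hδpos] at h1
    rw [abs_neg, abs_of_pos hδpos] at h2
    have heq : w (s, t, 0) - (1/2) * w (s, t-δ, 0) - (1/2) * w (s, t+δ, 0)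
        = -(1/2) * ((w (s, t+δ, 0) - w (s, t, 0) - fderiv ℝ w (s, t, 0) (0, 1, 0) * δ)
            + (w (s, t-δ, 0) - w (s, t, 0) - fderiv ℝ w (s, t, 0) (0, 1, 0) * (-δ))) := by
      ring
    rw [heq]
    rw [abs_mul]
    have := abs_add_le (w (s, t+δ, 0) - w (s, t, 0) - fderiv ℝ w (s, t, 0) (0, 1, 0) * δ)
      (w (s, t-δ, 0) - w (s, t, 0) - fderiv ℝ w (s, t, 0) (0, 1, 0) * (-δ))
    have habsc : |(-(1/2) : ℝ)| = (1/2 : ℝ) := by norm_num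
    rw [habsc]
    linarith
  -- assemble
  have hσ1 : σ s t = w (s, t, (|u| * δ) ^ κ) := by
    rw [h.σ_eq s hsab t htab, show s - t = u * δ by rw [hsdef]; ring, abs_mul,
      abs_of_pos hδpos]
  have hσ2 : σ s (t - δ) = w (s, t - δ, (|u + 1| * δ) ^ κ) := by
    rw [h.σ_eq s hsab (t - δ) htm, show s - (t - δ) = (u + 1) * δ by rw [hsdef]; ring,
      abs_mul, abs_of_pos hδpos]
  have hσ3 : σ s (t + δ) = w (s, t + δ, (|u - 1| * δ) ^ κ) := by
    rw [h.σ_eq s hsab (t + δ) htp, show s - (t + δ) = (u - 1) * δ by rw [hsdef]; ring,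
      abs_mul, abs_of_pos hδpos]
  have hz0eq : (|u| * δ) ^ κ = |u| ^ κ * δ ^ κ := Real.mul_rpow (abs_nonneg _) hδpos.le
  have hz1eq : (|u + 1| * δ) ^ κ = |u + 1| ^ κ * δ ^ κ := Real.mul_rpow (abs_nonneg _) hδpos.le
  have hz2eq : (|u - 1| * δ) ^ κ = |u - 1| ^ κ * δ ^ κ := Real.mul_rpow (abs_nonneg _) hδpos.le
  have hrw : gdelta σ δ t s
        + c t * δ ^ κ * (|u| ^ κ - (1 / 2) * |u + 1| ^ κ - (1 / 2) * |u - 1| ^ κ)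
      = (w (s, t, 0) - (1/2) * w (s, t-δ, 0) - (1/2) * w (s, t+δ, 0))
        + (w (s, t, (|u| * δ) ^ κ) - w (s, t, 0) + c t * ((|u| * δ) ^ κ))
        - (1/2) * (w (s, t-δ, (|u + 1| * δ) ^ κ) - w (s, t-δ, 0) + c t * ((|u + 1| * δ) ^ κ))
        - (1/2) * (w (s, t+δ, (|u - 1| * δ) ^ κ) - w (s, t+δ, 0) + c t * ((|u - 1| * δ) ^ κ)) := by
    unfold gdelta
    rw [hσ1, hσ2, hσ3, hz0eq, hz1eq, hz2eq]
    ring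
  have hE0 := key t htab (by simp [abs_of_nonneg, hδpos.le]) u
    (by have : |u| ≤ C := abs_le.mpr ⟨hu1, hu2⟩; linarith)
  have hE1 := key (t - δ) htm (by rw [show t - δ - t = -δ by ring, abs_neg,
    abs_of_pos hδpos]) (u + 1) (by rw [abs_le]; constructor <;> linarith)
  have hE2 := key (t + δ) htp (by rw [show t + δ - t = δ by ring, abs_of_pos hδpos])
    (u - 1) (by rw [abs_le]; constructor <;> linarith)
  rw [hrw]
  set R : ℝ := L * ((1+C) ^ κ * δ ^ κ) ^ 2 + L * ((1+C) * δ) * ((1+C) ^ κ * δ ^ κ) with hRdef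
  set A : ℝ := w (s, t, 0) - (1/2) * w (s, t-δ, 0) - (1/2) * w (s, t+δ, 0) with hAdef
  set E0 : ℝ := w (s, t, (|u| * δ) ^ κ) - w (s, t, 0) + c t * ((|u| * δ) ^ κ) with hE0def
  set E1 : ℝ := w (s, t-δ, (|u + 1| * δ) ^ κ) - w (s, t-δ, 0) + c t * ((|u + 1| * δ) ^ κ)
    with hE1def
  set E2 : ℝ := w (s, t+δ, (|u - 1| * δ) ^ κ) - w (s, t+δ, 0) + c t * ((|u - 1| * δ) ^ κ)
    with hE2def
  have htri : |A + E0 - (1/2) * E1 - (1/2) * E2| ≤ |A| + |E0| + (1/2) * |E1| + (1/2) * |E2| := by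
    have h1 := abs_sub (A + E0 - (1/2) * E1) ((1/2) * E2)
    have h2 := abs_sub (A + E0) ((1/2) * E1)
    have h3 := abs_add_le A E0
    rw [abs_mul, show |(1:ℝ)/2| = 1/2 by norm_num] at h1 h2
    linarith
  have hsum : |A| + |E0| + (1/2) * |E1| + (1/2) * |E2| ≤ L * δ ^ 2 + 2 * R := by
    have := hE0
    linarith [hA, hE0, hE1, hE2]
  -- convert powers
  have hm2 : min (2 * κ) 2 ≤ 2 := min_le_right _ _
  have hm2κ : min (2 * κ) 2 ≤ 2 * κ := min_le_left _ _
  have hm1κ : min (2 * κ) 2 ≤ 1 + κ := by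
    rcases le_total κ 1 with hk | hk
    · exact le_trans (min_le_left _ _) (by linarith)
    · exact le_trans (min_le_right _ _) (by linarith)
  have hp2 : δ ^ (2:ℕ) ≤ δ ^ min (2 * κ) 2 := by
    rw [← Real.rpow_natCast δ 2]
    exact Real.rpow_le_rpow_of_exponent_ge hδpos hδ1 (by exact_mod_cast hm2)
  have hp2κ : (δ ^ κ) ^ (2:ℕ) ≤ δ ^ min (2 * κ) 2 := by
    rw [← Real.rpow_natCast (δ ^ κ) 2, ← Real.rpow_mul hδpos.le]
    exact Real.rpow_le_rpow_of_exponent_ge hδpos hδ1 (by push_cast; linarith)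
  have hp1κ : δ * δ ^ κ ≤ δ ^ min (2 * κ) 2 := by
    have : δ * δ ^ κ = δ ^ (1 + κ) := by
      rw [Real.rpow_add hδpos, Real.rpow_one]
    rw [this]
    exact Real.rpow_le_rpow_of_exponent_ge hδpos hδ1 hm1κ
  have hfinal : L * δ ^ 2 + 2 * R
      ≤ (L + 2 * L * ((1+C) ^ κ) ^ 2 + 2 * L * ((1+C) * (1+C) ^ κ)) * δ ^ min (2 * κ) 2 := by
    have hc1 : (0:ℝ) ≤ L * ((1+C) ^ κ) ^ 2 := by positivity
    have hc2 : (0:ℝ) ≤ L * ((1+C) * (1+C) ^ κ) := by positivity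
    have b1 : L * δ ^ 2 ≤ L * δ ^ min (2 * κ) 2 := mul_le_mul_of_nonneg_left hp2 hL0
    have b2 : (L * ((1+C) ^ κ) ^ 2) * (δ ^ κ) ^ (2:ℕ)
        ≤ (L * ((1+C) ^ κ) ^ 2) * δ ^ min (2 * κ) 2 := mul_le_mul_of_nonneg_left hp2κ hc1
    have b3 : (L * ((1+C) * (1+C) ^ κ)) * (δ * δ ^ κ)
        ≤ (L * ((1+C) * (1+C) ^ κ)) * δ ^ min (2 * κ) 2 := mul_le_mul_of_nonneg_left hp1κ hc2
    have hb : L * δ ^ 2 + 2 * R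
        = L * δ ^ (2:ℕ) + 2 * ((L * ((1+C) ^ κ) ^ 2) * (δ ^ κ) ^ (2:ℕ))
          + 2 * ((L * ((1+C) * (1+C) ^ κ)) * (δ * δ ^ κ)) := by rw [hRdef]; ring
    have hb2 : (L + 2 * L * ((1+C) ^ κ) ^ 2 + 2 * L * ((1+C) * (1+C) ^ κ)) * δ ^ min (2 * κ) 2
        = L * δ ^ min (2 * κ) 2 + 2 * ((L * ((1+C) ^ κ) ^ 2) * δ ^ min (2 * κ) 2)
          + 2 * ((L * ((1+C) * (1+C) ^ κ)) * δ ^ min (2 * κ) 2) := by ring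
    rw [hb, hb2]
    linarith [b1, b2, b3]
  calc |A + E0 - (1/2) * E1 - (1/2) * E2| ≤ |A| + |E0| + (1/2) * |E1| + (1/2) * |E2| := htri
    _ ≤ L * δ ^ 2 + 2 * R := hsum
    _ ≤ _ := hfinal
end
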